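/- If the gain is taken as S = (1/2)Φ with Û = ΘX, ΘΦ = I_r, Cov(U,U)=Cov(Û,Û), U uncorrelated with X, and the residual condition Cov(X - ΦÛ, Û) = 0 holds, then trace Cov(Z,Z) = trace Cov(X,X) - (1/2) trace(Φ Cov(Û,Û) Φ^T), quantifying the variance reduction of the MFEnKF total variate. -/

import Mathlib

open MeasureTheory Matrix

/-- Component-wise mean of a random vector. -/
noncomputable def rmean {Ω : Type*} [MeasureSpace Ω] {ι : Type*}
    (X : Ω → ι → ℝ) : ι → ℝ := fun i => ∫ ω, X ω i

/-- Covariance matrix of two random vectors. -/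
noncomputable def rcov {Ω : Type*} [MeasureSpace Ω] {ι κ : Type*}
    (X : Ω → ι → ℝ) (Y : Ω → κ → ℝ) : Matrix ι κ ℝ :=
  Matrix.of fun i j => ∫ ω, (X ω i - rmean X i) * (Y ω j - rmean Y j)

section Aux

variable {Ω : Type*} [MeasureSpace Ω] [IsProbabilityMeasure (volume : Measure Ω)]

lemma int_mul_of_l2 {f g : Ω → ℝ} (hf : MemLp f 2) (hg : MemLp g 2) :
    Integrable (fun ω => f ω * g ω) := by
  have h := (((hf.add hg).integrable_sq.sub hf.integrable_sq).sub hg.integrable_sq).div_const 2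
  have he : (fun ω => f ω * g ω) = fun ω => (((f ω + g ω) ^ 2 - f ω ^ 2) - g ω ^ 2) / 2 := by
    funext ω; ring
  rw [he]; exact h

variable {ι κ τ : Type*} [Fintype ι] [Fintype κ] [Fintype τ]

lemma memℒp_mulVec {X : Ω → κ → ℝ} (hX : ∀ i, MemLp (fun ω => X ω i) 2)
    (A : Matrix ι κ ℝ) (i : ι) : MemLp (fun ω => A.mulVec (X ω) i) 2 := by
  have he : (fun ω => A.mulVec (X ω) i) = fun ω => ∑ k, A i k * X ω k := by
    funext ω; simp [Matrix.mulVec, dotProduct]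
  rw [he]
  exact memLp_finset_sum _ (fun k _ => (hX k).const_mul _)

lemma rmean_sub' {X Y : Ω → ι → ℝ} (hX : ∀ i, Integrable (fun ω => X ω i))
    (hY : ∀ i, Integrable (fun ω => Y ω i)) :
    rmean (fun ω => X ω - Y ω) = rmean X - rmean Y := by
  funext i
  simp only [rmean, Pi.sub_apply]
  exact integral_sub (hX i) (hY i)

lemma rmean_mulVec {X : Ω → κ → ℝ} (hX : ∀ i, Integrable (fun ω => X ω i))
    (A : Matrix ι κ ℝ) :
    rmean (fun ω => A.mulVec (X ω)) = A.mulVec (rmean X) := by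
  funext i
  simp only [rmean, Matrix.mulVec, dotProduct]
  rw [integral_finset_sum _ (fun k _ => (hX k).const_mul _)]
  simp [integral_const_mul, rmean]

lemma rcov_apply (X : Ω → ι → ℝ) (Y : Ω → κ → ℝ) (i : ι) (j : κ) :
    rcov X Y i j = ∫ ω, (X ω i - rmean X i) * (Y ω j - rmean Y j) := rfl

lemma rcov_transpose (X : Ω → ι → ℝ) (Y : Ω → κ → ℝ) :
    (rcov X Y)ᵀ = rcov Y X := by
  ext j i
  simp only [Matrix.transpose_apply, rcov_apply]
  congr 1; funext ω; ring

lemma rcov_mulVec_right {X : Ω → ι → ℝ} {Y : Ω → κ → ℝ}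
    (hX : ∀ i, MemLp (fun ω => X ω i) 2) (hY : ∀ i, MemLp (fun ω => Y ω i) 2)
    (A : Matrix τ κ ℝ) :
    rcov X (fun ω => A.mulVec (Y ω)) = rcov X Y * Aᵀ := by
  have hYi : ∀ i, Integrable (fun ω => Y ω i) := fun i => (hY i).integrable one_le_two
  ext i j
  have hm : rmean (fun ω => A.mulVec (Y ω)) = A.mulVec (rmean Y) := rmean_mulVec hYi A
  simp only [rcov_apply, hm, Matrix.mul_apply, Matrix.transpose_apply]
  have he : ∀ ω, (X ω i - rmean X i) * (A.mulVec (Y ω) j - A.mulVec (rmean Y) j)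
      = ∑ k, A j k * ((X ω i - rmean X i) * (Y ω k - rmean Y k)) := by
    intro ω
    simp only [Matrix.mulVec, dotProduct, ← Finset.sum_sub_distrib, Finset.mul_sum]
    congr 1; funext k; ring
  rw [integral_congr_ae (Filter.Eventually.of_forall he)]
  rw [integral_finset_sum]
  · simp only [integral_const_mul]
    exact Finset.sum_congr rfl fun k _ => mul_comm _ _
  · intro k _
    have hXc : MemLp (fun ω => X ω i - rmean X i) 2 := by
      exact (hX i).sub (memLp_const _)
    have hYc : MemLp (fun ω => Y ω k - rmean Y k) 2 := by
      exact (hY k).sub (memLp_const _)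
    exact (int_mul_of_l2 hXc hYc).const_mul _

lemma rcov_mulVec_left {X : Ω → ι → ℝ} {Y : Ω → κ → ℝ}
    (hX : ∀ i, MemLp (fun ω => X ω i) 2) (hY : ∀ i, MemLp (fun ω => Y ω i) 2)
    (A : Matrix τ ι ℝ) :
    rcov (fun ω => A.mulVec (X ω)) Y = A * rcov X Y := by
  have h := rcov_mulVec_right hY hX A
  rw [← rcov_transpose, h, Matrix.transpose_mul, Matrix.transpose_transpose,
    rcov_transpose]

lemma rcov_sub_left {X Y : Ω → ι → ℝ} {W : Ω → κ → ℝ}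
    (hX : ∀ i, MemLp (fun ω => X ω i) 2) (hY : ∀ i, MemLp (fun ω => Y ω i) 2)
    (hW : ∀ i, MemLp (fun ω => W ω i) 2) :
    rcov (fun ω => X ω - Y ω) W = rcov X W - rcov Y W := by
  have hm : rmean (fun ω => X ω - Y ω) = rmean X - rmean Y :=
    rmean_sub' (fun i => (hX i).integrable one_le_two) (fun i => (hY i).integrable one_le_two)
  ext i j
  simp only [Matrix.sub_apply, rcov_apply, hm]
  have he : ∀ ω, ((X ω - Y ω) i - (rmean X - rmean Y) i) * (W ω j - rmean W j)
      = (X ω i - rmean X i) * (W ω j - rmean W j)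
        - (Y ω i - rmean Y i) * (W ω j - rmean W j) := by
    intro ω; simp only [Pi.sub_apply]; ring
  rw [integral_congr_ae (Filter.Eventually.of_forall he)]
  have hXc : MemLp (fun ω => X ω i - rmean X i) 2 := by
    exact (hX i).sub (memLp_const _)
  have hYc : MemLp (fun ω => Y ω i - rmean Y i) 2 := by
    exact (hY i).sub (memLp_const _)
  have hWc : MemLp (fun ω => W ω j - rmean W j) 2 := by
    exact (hW j).sub (memLp_const _)
  exact integral_sub (int_mul_of_l2 hXc hWc) (int_mul_of_l2 hYc hWc)

lemma rcov_sub_right {X : Ω → ι → ℝ} {Y W : Ω → κ → ℝ}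
    (hX : ∀ i, MemLp (fun ω => X ω i) 2) (hY : ∀ i, MemLp (fun ω => Y ω i) 2)
    (hW : ∀ i, MemLp (fun ω => W ω i) 2) :
    rcov X (fun ω => Y ω - W ω) = rcov X Y - rcov X W := by
  rw [← rcov_transpose, rcov_sub_left hY hW hX, Matrix.transpose_sub,
    rcov_transpose, rcov_transpose]

lemma rmean_smul (c : ℝ) (X : Ω → ι → ℝ) :
    rmean (fun ω => c • X ω) = c • rmean X := by
  funext i
  simp only [rmean, Pi.smul_apply, smul_eq_mul]
  exact integral_const_mul _ _

lemma rcov_smul_left (c : ℝ) (X : Ω → ι → ℝ) (W : Ω → κ → ℝ) :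
    rcov (fun ω => c • X ω) W = c • rcov X W := by
  ext i j
  simp only [rcov_apply, rmean_smul, Matrix.smul_apply, Pi.smul_apply, smul_eq_mul]
  rw [← integral_const_mul]
  congr 1; funext ω; ring

lemma rcov_smul_right (c : ℝ) (X : Ω → ι → ℝ) (W : Ω → κ → ℝ) :
    rcov X (fun ω => c • W ω) = c • rcov X W := by
  rw [← rcov_transpose, rcov_smul_left, Matrix.transpose_smul, rcov_transpose]

end Aux

/-- **Variance reduction of the MFEnKF total variate.** With `S = (1/2)Φ`,
`Û = ΘX`, `ΘΦ = I`, `Cov(U,U) = Cov(Û,Û)`, `U` uncorrelated with `X`, and the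
residual condition `Cov(X - ΦÛ, Û) = 0`, one has
`trace Cov(Z,Z) = trace Cov(X,X) - (1/2) trace(Φ Cov(Û,Û) Φᵀ)`. -/
theorem mfenkf_variance_reduction
    {Ω : Type*} [MeasureSpace Ω] [IsProbabilityMeasure (volume : Measure Ω)]
    {n r : ℕ} (X : Ω → Fin n → ℝ) (U : Ω → Fin r → ℝ)
    (Θ : Matrix (Fin r) (Fin n) ℝ) (Φ : Matrix (Fin n) (Fin r) ℝ)
    (hΘΦ : Θ * Φ = 1)
    (Uhat : Ω → Fin r → ℝ) (hUhatdef : ∀ ω, Uhat ω = Θ.mulVec (X ω))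
    (hX : ∀ i, MemLp (fun ω => X ω i) 2)
    (hU : ∀ i, MemLp (fun ω => U ω i) 2)
    (hUX : rcov U X = 0) (hXU : rcov X U = 0)
    (hcoveq : rcov U U = rcov Uhat Uhat)
    (hres : rcov (fun ω => X ω - Φ.mulVec (Uhat ω)) Uhat = 0)
    (Z : Ω → Fin n → ℝ)
    (hZ : ∀ ω, Z ω = X ω - (1 / 2 : ℝ) • Φ.mulVec (Uhat ω - U ω)) :
    (rcov Z Z).trace
      = (rcov X X).trace - (1 / 2 : ℝ) * (Φ * rcov Uhat Uhat * Φᵀ).trace := by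
  have hUe : Uhat = fun ω => Θ.mulVec (X ω) := funext hUhatdef
  have hUhat : ∀ i, MemLp (fun ω => Uhat ω i) 2 := by
    simp only [hUe]; exact memℒp_mulVec hX Θ
  have hΦU : ∀ i, MemLp (fun ω => Φ.mulVec (Uhat ω) i) 2 := memℒp_mulVec hUhat Φ
  have hCsymm : (rcov Uhat Uhat)ᵀ = rcov Uhat Uhat := rcov_transpose Uhat Uhat
  have hXUhat : rcov X Uhat = Φ * rcov Uhat Uhat := by
    have h := hres
    rw [rcov_sub_left hX hΦU hUhat, rcov_mulVec_left hUhat hUhat Φ, sub_eq_zero] at h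
    exact h
  have hUhatX : rcov Uhat X = rcov Uhat Uhat * Φᵀ := by
    rw [← rcov_transpose X Uhat, hXUhat, Matrix.transpose_mul, hCsymm]
  have hUUhat : rcov U Uhat = 0 := by
    rw [hUe, rcov_mulVec_right hU hX Θ, hUX, Matrix.zero_mul]
  have hUhatU : rcov Uhat U = 0 := by
    rw [hUe, rcov_mulVec_left hX hU Θ, hXU, Matrix.mul_zero]
  have hD : ∀ i, MemLp (fun ω => (Uhat ω - U ω) i) 2 := by
    intro i; exact (hUhat i).sub (hU i)
  have hg : ∀ i, MemLp (fun ω => Φ.mulVec (Uhat ω - U ω) i) 2 := memℒp_mulVec hD Φ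
  have hsg : ∀ i, MemLp (fun ω => ((1 / 2 : ℝ) • Φ.mulVec (Uhat ω - U ω)) i) 2 := by
    intro i
    simpa [Pi.smul_apply, smul_eq_mul] using (hg i).const_mul (1 / 2 : ℝ)
  have hZl : ∀ i, MemLp (fun ω => (X ω - (1 / 2 : ℝ) • Φ.mulVec (Uhat ω - U ω)) i) 2 := by
    intro i; exact (hX i).sub (hsg i)
  have hZe : Z = fun ω => X ω - (1 / 2 : ℝ) • Φ.mulVec (Uhat ω - U ω) := funext hZ
  have hXsg : rcov X (fun ω => (1 / 2 : ℝ) • Φ.mulVec (Uhat ω - U ω))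
      = (1 / 2 : ℝ) • (Φ * rcov Uhat Uhat * Φᵀ) := by
    rw [rcov_smul_right, rcov_mulVec_right hX hD Φ, rcov_sub_right hX hUhat hU,
      hXU, hXUhat, sub_zero]
  have hsgX : rcov (fun ω => (1 / 2 : ℝ) • Φ.mulVec (Uhat ω - U ω)) X
      = (1 / 2 : ℝ) • (Φ * rcov Uhat Uhat * Φᵀ) := by
    rw [rcov_smul_left, rcov_mulVec_left hD hX Φ, rcov_sub_left hUhat hU hX,
      hUX, hUhatX, sub_zero, Matrix.mul_assoc]
  have hsgsg : rcov (fun ω => (1 / 2 : ℝ) • Φ.mulVec (Uhat ω - U ω))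
      (fun ω => (1 / 2 : ℝ) • Φ.mulVec (Uhat ω - U ω))
      = (1 / 2 : ℝ) • (Φ * rcov Uhat Uhat * Φᵀ) := by
    rw [rcov_smul_left, rcov_smul_right, rcov_mulVec_left hD hg Φ,
      rcov_mulVec_right hD hD Φ, rcov_sub_left hUhat hU hD,
      rcov_sub_right hUhat hUhat hU, rcov_sub_right hU hUhat hU,
      hUhatU, hUUhat, hcoveq, sub_zero, zero_sub, sub_neg_eq_add,
      ← Matrix.mul_assoc, Matrix.mul_add, Matrix.add_mul]
    module
  have key : rcov Z Z = rcov X X - (1 / 2 : ℝ) • (Φ * rcov Uhat Uhat * Φᵀ) := by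
    rw [hZe, rcov_sub_left hX hsg hZl, rcov_sub_right hX hX hsg,
      rcov_sub_right hsg hX hsg, hXsg, hsgX, hsgsg]
    abel
  rw [key, Matrix.trace_sub, Matrix.trace_smul, smul_eq_mul]
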